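/- Let φ : ℝ → ℝ be strictly convex twice differentiable on [x₁, xₙ] with φ' < 0 on [x₁, xₙ], and let x₁ ≤ x₂ ≤ … ≤ xₙ be data with not all equal, x̄ their mean and φ̄ the mean of their φ-values. Then there exists μ ∈ (x̄_φ, x̄] with (x̄ - μ) + (φ̄ - φ(μ))φ'(μ) = 0, where x̄_φ := φ⁻¹(φ̄) ∈ [x₁, x̄] is the φ-mean. -/
import Mathlib


open Finset

/-- Existence of a candidate right population minimizer for the total Bregman divergence
when `φ' < 0` on the data range: there is `μ ∈ (x̄_φ, x̄]` satisfying the orthogonality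
condition, where `x̄_φ = φ⁻¹(φ̄) ∈ [x₁, x̄]` is the `φ`-mean. -/
theorem candidate_minimizer_exists_neg_slope {n : ℕ}
    (φ : ℝ → ℝ)
    (hconv : StrictConvexOn ℝ Set.univ φ)
    (hsmooth : ContDiff ℝ 2 φ)
    (xs : Fin (n + 1) → ℝ) (hmono : Monotone xs)
    (hne : ∃ i j, xs i ≠ xs j)
    (hneg : ∀ y ∈ Set.Icc (xs 0) (xs (Fin.last n)), deriv φ y < 0)
    (xbar phibar : ℝ)
    (hxbar : xbar = (1 / (n + 1) : ℝ) * ∑ i, xs i)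
    (hphibar : phibar = (1 / (n + 1) : ℝ) * ∑ i, φ (xs i)) :
    ∃ xφ μ : ℝ, φ xφ = phibar ∧ xφ ∈ Set.Icc (xs 0) xbar ∧
      μ ∈ Set.Ioc xφ xbar ∧
      (xbar - μ) + (phibar - φ μ) * deriv φ μ = 0 := by
  classical
  have hnpos : (0:ℝ) < n + 1 := by positivity
  have hwpos : (0:ℝ) < 1 / (n + 1) := by positivity
  have hw1 : ∑ _i : Fin (n+1), (1/(n+1:ℝ)) = 1 := by
    rw [Finset.sum_const, Finset.card_univ, Fintype.card_fin, nsmul_eq_mul]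
    push_cast
    field_simp
  have hxbar' : xbar = ∑ i, (1/(n+1:ℝ)) • xs i := by
    rw [hxbar, Finset.mul_sum]; rfl
  have hphibar' : phibar = ∑ i, (1/(n+1:ℝ)) • φ (xs i) := by
    rw [hphibar, Finset.mul_sum]; rfl
  have hale : ∀ i, xs 0 ≤ xs i := fun i => hmono (Fin.zero_le i)
  have hble : ∀ i, xs i ≤ xs (Fin.last n) := fun i => hmono (Fin.le_last i)
  -- strict Jensen
  have hjensen : φ xbar < phibar := by
    rw [hxbar', hphibar']
    refine hconv.map_sum_lt (fun i _ => hwpos) hw1 (fun i _ => trivial) ?_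
    obtain ⟨i, j, hij⟩ := hne
    exact ⟨i, mem_univ _, j, mem_univ _, hij⟩
  -- mean bounds
  have haxbar : xs 0 ≤ xbar := by
    have h1 : ∑ i : Fin (n+1), (1/(n+1:ℝ)) • xs 0 ≤ ∑ i, (1/(n+1:ℝ)) • xs i :=
      Finset.sum_le_sum fun i _ => smul_le_smul_of_nonneg_left (hale i) hwpos.le
    rw [← Finset.sum_smul, hw1, one_smul] at h1
    rw [hxbar']; exact h1
  have hxbarb : xbar ≤ xs (Fin.last n) := by
    have h1 : ∑ i, (1/(n+1:ℝ)) • xs i ≤ ∑ i : Fin (n+1), (1/(n+1:ℝ)) • xs (Fin.last n) :=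
      Finset.sum_le_sum fun i _ => smul_le_smul_of_nonneg_left (hble i) hwpos.le
    rw [← Finset.sum_smul, hw1, one_smul] at h1
    rw [hxbar']; exact h1
  have hab : xs 0 ≤ xs (Fin.last n) := le_trans haxbar hxbarb
  -- φ strictly decreasing on the data interval
  have hcont : Continuous φ := hsmooth.continuous
  have hanti : StrictAntiOn φ (Set.Icc (xs 0) (xs (Fin.last n))) :=
    strictAntiOn_of_deriv_neg (convex_Icc _ _) hcont.continuousOn
      (fun x hx => hneg x (by rw [interior_Icc] at hx; exact Set.Ioo_subset_Icc_self hx))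
  have hphile : phibar ≤ φ (xs 0) := by
    have h1 : ∑ i, (1/(n+1:ℝ)) • φ (xs i) ≤ ∑ i : Fin (n+1), (1/(n+1:ℝ)) • φ (xs 0) := by
      refine Finset.sum_le_sum fun i _ => smul_le_smul_of_nonneg_left ?_ hwpos.le
      exact hanti.antitoneOn ⟨le_refl _, hab⟩ ⟨hale i, hble i⟩ (hale i)
    rw [← Finset.sum_smul, hw1, one_smul] at h1
    rw [hphibar']; exact h1
  -- IVT for xφ
  obtain ⟨xφ, hxφmem, hxφval⟩ :=
    intermediate_value_Icc' haxbar hcont.continuousOn ⟨hjensen.le, hphile⟩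
  have hxφlt : xφ < xbar := by
    rcases lt_or_eq_of_le hxφmem.2 with h | h
    · exact h
    · exfalso; rw [h] at hxφval; rw [hxφval] at hjensen; exact lt_irrefl _ hjensen
  -- IVT for μ
  set F : ℝ → ℝ := fun μ => (xbar - μ) + (phibar - φ μ) * deriv φ μ with hF
  have hFcont : Continuous F := by
    exact (continuous_const.sub continuous_id).add
      ((continuous_const.sub hcont).mul (hsmooth.continuous_deriv one_le_two))
  have hFxφ : 0 < F xφ := by
    simp only [hF, hxφval, sub_self, zero_mul, add_zero]
    linarith
  have hFxbar : F xbar < 0 := by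
    have h1 : 0 < phibar - φ xbar := sub_pos.2 hjensen
    have h2 : deriv φ xbar < 0 := hneg xbar ⟨haxbar, hxbarb⟩
    have := mul_neg_of_pos_of_neg h1 h2
    simp only [hF]
    linarith
  obtain ⟨μ, hμmem, hμval⟩ :=
    intermediate_value_Icc' hxφlt.le hFcont.continuousOn ⟨hFxbar.le, hFxφ.le⟩
  have hμne : xφ < μ := by
    rcases lt_or_eq_of_le hμmem.1 with h | h
    · exact h
    · exfalso; rw [← h] at hμval; rw [hμval] at hFxφ; exact lt_irrefl _ hFxφ
  exact ⟨xφ, μ, hxφval, ⟨hxφmem.1, hxφmem.2⟩, ⟨hμne, hμmem.2⟩, hμval⟩
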